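/- In the unconditional independent model with m ≥ 2 hypotheses, for a step-up procedure SU(t) with nondecreasing threshold t, the number of falsely rejected hypotheses |H₀(H) ∩ SU(t)|, conditionally on the total rejection number |SU(t)| = k (for k ≥ 1), follows a binomial distribution B(k, π₀F₀(tₖ)/G(tₖ)), where G(t) = π₀F₀(t) + (1−π₀)F₁(t) and F₀(t) = t. -/

import Mathlib

open MeasureTheory Finset
open scoped Classical

noncomputable def unifM : Measure ℝ := volume.restrict (Set.Ioo (0:ℝ) 1)

noncomputable def iidUnif (k : ℕ) : Measure (Fin k → ℝ) := Measure.pi fun _ => unifM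

/-- `Psi k t` is the probability that the order statistics `U_(1) ≤ ... ≤ U_(k)` of
`k` i.i.d. uniform variables on `(0,1)` satisfy `U_(j) ≤ t j` for all `1 ≤ j ≤ k`
(1-indexed thresholds), expressed via the counting characterization
`U_(j) ≤ s ↔ #{i : U i ≤ s} ≥ j`. By convention `Psi 0 t = 1`. -/
noncomputable def Psi (k : ℕ) (t : ℕ → ℝ) : ℝ :=
  (iidUnif k {x | ∀ j ∈ Finset.Icc 1 k,
    j ≤ (Finset.univ.filter (fun i : Fin k => x i ≤ t j)).card}).toReal

/-- Rejection number of the step-up procedure with threshold `t` (1-indexed, `t 0 = 0`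
by convention) applied to the `p`-values `p : Fin m → ℝ`:
the largest `k ≤ m` such that at least `k` of the `p`-values are `≤ t k`. -/
noncomputable def kSUf (m : ℕ) (t : ℕ → ℝ) (p : Fin m → ℝ) : ℕ :=
  Nat.findGreatest (fun k => k ≤ (Finset.univ.filter (fun i : Fin m => p i ≤ t k)).card) m

/-- The set of hypotheses rejected by the step-up procedure. -/
noncomputable def rejSUf (m : ℕ) (t : ℕ → ℝ) (p : Fin m → ℝ) : Finset (Fin m) :=
  Finset.univ.filter (fun i => p i ≤ t (kSUf m t p))

/-- Rejection number of the step-down procedure with threshold `t` applied to `p`: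
the largest `k ≤ m` such that for all `k' ≤ k` at least `k'` of the `p`-values are `≤ t k'`. -/
noncomputable def kSDf (m : ℕ) (t : ℕ → ℝ) (p : Fin m → ℝ) : ℕ :=
  Nat.findGreatest
    (fun k => ∀ k' ∈ Finset.Icc 1 k,
      k' ≤ (Finset.univ.filter (fun i : Fin m => p i ≤ t k')).card) m

/-- The set of hypotheses rejected by the step-down procedure. -/
noncomputable def rejSDf (m : ℕ) (t : ℕ → ℝ) (p : Fin m → ℝ) : Finset (Fin m) :=
  Finset.univ.filter (fun i => p i ≤ t (kSDf m t p))

/-- Per-coordinate law of `(Hᵢ, pᵢ)` in the unconditional independent model: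
with probability `π₀` the null holds (`Hᵢ = false`) and `pᵢ` is uniform on `(0,1)`;
with probability `1 - π₀` the alternative holds (`Hᵢ = true`) and `pᵢ ∼ μ1`. -/
noncomputable def coordM (pi0 : ℝ) (μ1 : Measure ℝ) : Measure (Bool × ℝ) :=
  (ENNReal.ofReal pi0) • ((Measure.dirac false).prod unifM)
    + (ENNReal.ofReal (1 - pi0)) • ((Measure.dirac true).prod μ1)

/-- The unconditional independent model: `m` i.i.d. copies of `(Hᵢ, pᵢ)`. -/
noncomputable def modelM (m : ℕ) (pi0 : ℝ) (μ1 : Measure ℝ) : Measure (Fin m → Bool × ℝ) :=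
  Measure.pi fun _ => coordM pi0 μ1

/-- The `p`-value family of an outcome `ω`. -/
noncomputable def pvals (m : ℕ) (ω : Fin m → Bool × ℝ) : Fin m → ℝ := fun i => (ω i).2

/-- Number of true null hypotheses rejected by the step-up procedure. -/
noncomputable def V0SU (m : ℕ) (t : ℕ → ℝ) (ω : Fin m → Bool × ℝ) : ℕ :=
  ((rejSUf m t (pvals m ω)).filter (fun i => (ω i).1 = false)).card

/-- Number of true null hypotheses rejected by the step-down procedure. -/
noncomputable def V0SD (m : ℕ) (t : ℕ → ℝ) (ω : Fin m → Bool × ℝ) : ℕ :=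
  ((rejSDf m t (pvals m ω)).filter (fun i => (ω i).1 = false)).card

/-! ### Auxiliary lemmas -/
open scoped ENNReal

instance : IsProbabilityMeasure unifM := by
  constructor
  simp [unifM, Measure.restrict_apply MeasurableSet.univ, Real.volume_Ioo]

lemma unifM_Iic {s : ℝ} (h1 : s ≤ 1) : unifM (Set.Iic s) = ENNReal.ofReal s := by
  rw [unifM, Measure.restrict_apply measurableSet_Iic]
  apply le_antisymm
  · calc volume (Set.Iic s ∩ Set.Ioo 0 1) ≤ volume (Set.Ioc 0 s) := by
          apply measure_mono; rintro x ⟨hx1, hx2, _⟩; exact ⟨hx2, hx1⟩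
    _ = ENNReal.ofReal s := by rw [Real.volume_Ioc]; simp
  · calc ENNReal.ofReal s = volume (Set.Ioo 0 s) := by rw [Real.volume_Ioo]; simp
    _ ≤ volume (Set.Iic s ∩ Set.Ioo 0 1) := by
          apply measure_mono; rintro x ⟨hx1, hx2⟩
          exact ⟨le_of_lt hx2, hx1, lt_of_lt_of_le hx2 h1⟩

section coordMlemmas
variable {pi0 : ℝ} {μ1 : Measure ℝ}

lemma coordM_apply (S : Set (Bool × ℝ)) :
    coordM pi0 μ1 S = ENNReal.ofReal pi0 * ((Measure.dirac false).prod unifM) S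
      + ENNReal.ofReal (1 - pi0) * ((Measure.dirac true).prod μ1) S := by
  simp [coordM]

lemma set_false_Iic (s : ℝ) :
    {z : Bool × ℝ | z.2 ≤ s ∧ z.1 = false} = ({false} : Set Bool) ×ˢ Set.Iic s := by
  ext ⟨b, x⟩
  simp only [Set.mem_prod, Set.mem_singleton_iff, Set.mem_Iic, Set.mem_setOf_eq]; tauto

lemma set_true_Iic (s : ℝ) :
    {z : Bool × ℝ | z.2 ≤ s ∧ z.1 = true} = ({true} : Set Bool) ×ˢ Set.Iic s := by
  ext ⟨b, x⟩
  simp only [Set.mem_prod, Set.mem_singleton_iff, Set.mem_Iic, Set.mem_setOf_eq]; tauto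

lemma coordM_false_Iic [SFinite μ1] {s : ℝ} (h1 : s ≤ 1) :
    coordM pi0 μ1 {z : Bool × ℝ | z.2 ≤ s ∧ z.1 = false}
      = ENNReal.ofReal pi0 * ENNReal.ofReal s := by
  rw [coordM_apply, set_false_Iic, Measure.prod_prod, Measure.prod_prod, unifM_Iic h1]
  simp [Measure.dirac_apply]

lemma coordM_true_Iic [SFinite μ1] (s : ℝ) :
    coordM pi0 μ1 {z : Bool × ℝ | z.2 ≤ s ∧ z.1 = true}
      = ENNReal.ofReal (1 - pi0) * μ1 (Set.Iic s) := by
  rw [coordM_apply, set_true_Iic, Measure.prod_prod, Measure.prod_prod]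
  simp [Measure.dirac_apply]

lemma coordM_Iic [SFinite μ1] {s : ℝ} (h1 : s ≤ 1) :
    coordM pi0 μ1 {z : Bool × ℝ | z.2 ≤ s}
      = coordM pi0 μ1 {z : Bool × ℝ | z.2 ≤ s ∧ z.1 = false}
        + coordM pi0 μ1 {z : Bool × ℝ | z.2 ≤ s ∧ z.1 = true} := by
  have h : {z : Bool × ℝ | z.2 ≤ s}
      = {z : Bool × ℝ | z.2 ≤ s ∧ z.1 = false} ∪ {z : Bool × ℝ | z.2 ≤ s ∧ z.1 = true} := by
    ext ⟨b, x⟩; cases b <;> simp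
  rw [h, measure_union]
  · rw [Set.disjoint_left]; rintro z ⟨-, hz1⟩ ⟨-, hz2⟩; simp [hz1] at hz2
  · rw [set_true_Iic]; exact (MeasurableSet.singleton true).prod measurableSet_Iic

lemma coordM_prob (hpi0 : pi0 ∈ Set.Icc (0:ℝ) 1) [IsProbabilityMeasure μ1] :
    IsProbabilityMeasure (coordM pi0 μ1) := by
  constructor
  rw [coordM_apply]
  rw [← Set.univ_prod_univ, Measure.prod_prod, Measure.prod_prod]
  simp only [measure_univ, mul_one]
  rw [← ENNReal.ofReal_add hpi0.1 (by linarith [hpi0.2])]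
  norm_num
end coordMlemmas

lemma measurable_card_filter {ι : Type*} [Fintype ι] {Ω : Type*} [MeasurableSpace Ω]
    (s : Finset ι) (P : ι → Ω → Prop) [∀ ω, DecidablePred (fun i => P i ω)]
    (h : ∀ i, MeasurableSet {ω | P i ω}) :
    Measurable (fun ω => (s.filter (fun i => P i ω)).card) := by
  simp only [Finset.card_filter]
  exact Finset.measurable_sum _ (fun i _ =>
    Measurable.ite (h i) measurable_const measurable_const)

lemma card_filter_subtype {ι : Type*} [Fintype ι] (q : ι → Prop) (P : ι → Prop) :
    ((Finset.univ : Finset {i : ι // q i}).filter (fun i => P i.1)).card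
      = (Finset.univ.filter (fun i : ι => P i ∧ q i)).card := by
  apply Finset.card_bij (fun (a : {i : ι // q i}) _ => a.1)
  · rintro ⟨a, ha⟩ hmem
    simp only [Finset.mem_filter, Finset.mem_univ, true_and] at hmem ⊢
    exact ⟨hmem, ha⟩
  · rintro ⟨a, ha⟩ - ⟨b, hb⟩ - h
    simpa using h
  · rintro b hb
    simp only [Finset.mem_filter, Finset.mem_univ, true_and] at hb
    exact ⟨⟨b, hb.2⟩, by simp [hb.1], rfl⟩

lemma count_split {m : ℕ} (S : Finset (Fin m)) (Q : Fin m → Prop) (hS : ∀ i ∈ S, Q i) :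
    (Finset.univ.filter (fun i : Fin m => Q i)).card
      = S.card + ((Finset.univ : Finset {i : Fin m // ¬ i ∈ S}).filter (fun i => Q i.1)).card := by
  have h1 : (Finset.univ.filter (fun i : Fin m => Q i))
      = S ∪ (Finset.univ.filter (fun i : Fin m => Q i ∧ ¬ i ∈ S)) := by
    ext i
    simp only [Finset.mem_filter, Finset.mem_univ, true_and, Finset.mem_union]
    by_cases h : i ∈ S
    · simp [h, hS i h]
    · simp [h]
  have h2 : ((Finset.univ : Finset {i : Fin m // ¬ i ∈ S}).filter (fun i => Q i.1)).card
      = (Finset.univ.filter (fun i : Fin m => Q i ∧ ¬ i ∈ S)).card := by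
    apply Finset.card_bij (fun (a : {i : Fin m // ¬ i ∈ S}) _ => a.1)
    · rintro ⟨a, ha⟩ hmem
      simp only [Finset.mem_filter, Finset.mem_univ, true_and] at hmem ⊢
      exact ⟨hmem, ha⟩
    · rintro ⟨a, ha⟩ - ⟨b, hb⟩ - h
      simpa using h
    · rintro b hb
      simp only [Finset.mem_filter, Finset.mem_univ, true_and] at hb
      exact ⟨⟨b, hb.2⟩, by simp [hb.1], rfl⟩
  rw [h1, Finset.card_union_of_disjoint, h2]
  rw [Finset.disjoint_left]
  intro a ha hb
  simp only [Finset.mem_filter] at hb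
  exact hb.2.2 ha

section char
variable {m : ℕ} {t : ℕ → ℝ} {p : Fin m → ℝ}

lemma count_mono (ht : MonotoneOn t (Set.Icc 1 m)) {n n' : ℕ} (h1 : 1 ≤ n) (h2 : n ≤ n')
    (h3 : n' ≤ m) :
    (Finset.univ.filter (fun i : Fin m => p i ≤ t n)).card
      ≤ (Finset.univ.filter (fun i : Fin m => p i ≤ t n')).card := by
  apply Finset.card_le_card
  apply Finset.monotone_filter_right
  intro i _ hi
  exact le_trans hi (ht ⟨h1, le_trans h2 h3⟩ ⟨le_trans h1 h2, h3⟩ h2)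

lemma kSUf_eq_of {k : ℕ} (hkm : k ≤ m)
    (hck : (Finset.univ.filter (fun i : Fin m => p i ≤ t k)).card = k)
    (htail : ∀ k', k < k' → k' ≤ m →
      (Finset.univ.filter (fun i : Fin m => p i ≤ t k')).card < k') :
    kSUf m t p = k := by
  rw [kSUf, Nat.findGreatest_eq_iff]
  exact ⟨hkm, fun _ => le_of_eq hck.symm,
    fun n h1 h2 hn => absurd hn (not_le.mpr (htail n h1 h2))⟩

lemma rejSU_card_eq (ht0 : t 0 = 0) (ht : MonotoneOn t (Set.Icc 1 m))
    (ht1 : 0 ≤ t 1) (hm : 1 ≤ m) {k : ℕ} (hk : 1 ≤ k) (hkm : k ≤ m) :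
    (rejSUf m t p).card = k ↔
      ((Finset.univ.filter (fun i : Fin m => p i ≤ t k)).card = k ∧
        ∀ k', k < k' → k' ≤ m →
          (Finset.univ.filter (fun i : Fin m => p i ≤ t k')).card < k') := by
  have hcm : ∀ n, (Finset.univ.filter (fun i : Fin m => p i ≤ t n)).card ≤ m := fun n =>
    le_trans (Finset.card_le_card (Finset.filter_subset _ _)) (by simp)
  constructor
  · intro hcard
    set K := kSUf m t p with hK
    have hKspec := (Nat.findGreatest_eq_iff (m := K) (k := m)
      (P := fun n => n ≤ (Finset.univ.filter (fun i : Fin m => p i ≤ t n)).card)).mp hK.symm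
    obtain ⟨hKm, hPK, hgr⟩ := hKspec
    have hcardK : (rejSUf m t p).card
        = (Finset.univ.filter (fun i : Fin m => p i ≤ t K)).card := rfl
    have hK1 : 1 ≤ K := by
      by_contra h
      push_neg at h
      interval_cases K
      · rw [hcardK] at hcard
        have hex : ∃ i, p i ≤ t 0 := by
          by_contra hno
          push_neg at hno
          rw [Finset.filter_false_of_mem (fun i _ => not_le.mpr (hno i)),
            Finset.card_empty] at hcard
          omega
        obtain ⟨i, hi⟩ := hex
        have h1 : 1 ≤ (Finset.univ.filter (fun i : Fin m => p i ≤ t 1)).card := by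
          apply Finset.card_pos.mpr
          exact ⟨i, Finset.mem_filter.mpr ⟨Finset.mem_univ i, le_trans (ht0 ▸ hi) ht1⟩⟩
        exact hgr (n := 1) (by omega) hm h1
    have hcK : (Finset.univ.filter (fun i : Fin m => p i ≤ t K)).card = K := by
      have hle := hPK (by omega)
      rcases Nat.lt_or_ge K ((Finset.univ.filter (fun i : Fin m => p i ≤ t K)).card) with hlt | hge
      · exfalso
        have hK1m : K + 1 ≤ m := le_trans hlt (hcm K)
        have : K + 1 ≤ (Finset.univ.filter (fun i : Fin m => p i ≤ t (K+1))).card :=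
          le_trans hlt (count_mono ht hK1 (Nat.le_succ K) hK1m)
        exact hgr (Nat.lt_succ_self K) hK1m this
      · omega
    have hKk : K = k := by rw [hcardK, hcK] at hcard; exact hcard
    subst hKk
    refine ⟨hcK, fun k' h1 h2 => ?_⟩
    have := hgr h1 h2
    omega
  · rintro ⟨hck, htail⟩
    rw [rejSUf, kSUf_eq_of hkm hck htail, hck]
end char

section piblocks
variable {ι : Type*} [Fintype ι]

lemma meas_pair_le_false (s : ℝ) : MeasurableSet {z : Bool × ℝ | z.2 ≤ s ∧ z.1 = false} := by
  rw [set_false_Iic]; exact (MeasurableSet.singleton false).prod measurableSet_Iic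

lemma meas_pair_le_true (s : ℝ) : MeasurableSet {z : Bool × ℝ | z.2 ≤ s ∧ z.1 = true} := by
  rw [set_true_Iic]; exact (MeasurableSet.singleton true).prod measurableSet_Iic

lemma meas_pair_le (s : ℝ) : MeasurableSet {z : Bool × ℝ | z.2 ≤ s} := by
  have h : {z : Bool × ℝ | z.2 ≤ s} = (Set.univ : Set Bool) ×ˢ Set.Iic s := by
    ext ⟨b, x⟩; simp
  rw [h]; exact MeasurableSet.univ.prod measurableSet_Iic

lemma pi_all_le (ν : Measure (Bool × ℝ)) [IsProbabilityMeasure ν] (s : ℝ) :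
    Measure.pi (fun _ : ι => ν) {x : ι → Bool × ℝ | ∀ i, (x i).2 ≤ s}
      = ν {z : Bool × ℝ | z.2 ≤ s} ^ (Fintype.card ι) := by
  have h : {x : ι → Bool × ℝ | ∀ i, (x i).2 ≤ s}
      = Set.univ.pi (fun _ => {z : Bool × ℝ | z.2 ≤ s}) := by
    ext x; simp [Set.mem_univ_pi]
  rw [h, Measure.pi_pi, Finset.prod_const, Finset.card_univ]

lemma filter_mem_eq (T : Finset ι) : Finset.univ.filter (fun i => i ∈ T) = T := by
  ext i; simp

lemma pi_binom (ν : Measure (Bool × ℝ)) [IsProbabilityMeasure ν] (s : ℝ) (j : ℕ) :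
    Measure.pi (fun _ : ι => ν)
      {x : ι → Bool × ℝ | (∀ i, (x i).2 ≤ s)
        ∧ (Finset.univ.filter (fun i => (x i).1 = false)).card = j}
      = ((Fintype.card ι).choose j)
          * ν {z : Bool × ℝ | z.2 ≤ s ∧ z.1 = false} ^ j
          * ν {z : Bool × ℝ | z.2 ≤ s ∧ z.1 = true} ^ (Fintype.card ι - j) := by
  set Cf := {z : Bool × ℝ | z.2 ≤ s ∧ z.1 = false} with hCf
  set Ct := {z : Bool × ℝ | z.2 ≤ s ∧ z.1 = true} with hCt
  have hsplit : {x : ι → Bool × ℝ | (∀ i, (x i).2 ≤ s)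
        ∧ (Finset.univ.filter (fun i => (x i).1 = false)).card = j}
      = ⋃ T ∈ Finset.powersetCard j (Finset.univ : Finset ι),
          Set.univ.pi (fun i => if i ∈ T then Cf else Ct) := by
    ext x
    simp only [Set.mem_setOf_eq, Set.mem_iUnion, Set.mem_univ_pi,
      Finset.mem_powersetCard_univ, exists_prop]
    constructor
    · rintro ⟨hle, hcard⟩
      refine ⟨Finset.univ.filter (fun i => (x i).1 = false), hcard, fun i => ?_⟩
      by_cases h : (x i).1 = false
      · simp only [Finset.mem_filter, Finset.mem_univ, true_and, h, if_true]
        exact ⟨hle i, h⟩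
      · simp only [Finset.mem_filter, Finset.mem_univ, true_and, h, if_false]
        exact ⟨hle i, by revert h; cases (x i).1 <;> simp⟩
    · rintro ⟨T, hT, hx⟩
      have hle : ∀ i, (x i).2 ≤ s := by
        intro i
        have := hx i
        by_cases h : i ∈ T <;> simp [h, hCf, hCt] at this <;> exact this.1
      refine ⟨hle, ?_⟩
      have hfe : Finset.univ.filter (fun i => (x i).1 = false) = T := by
        ext i
        simp only [Finset.mem_filter, Finset.mem_univ, true_and]
        have := hx i
        by_cases h : i ∈ T <;> simp [h, hCf, hCt] at this <;> simp [h, this.2]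
      rw [hfe, hT]
  rw [hsplit, measure_biUnion_finset]
  · have heach : ∀ T ∈ Finset.powersetCard j (Finset.univ : Finset ι),
        Measure.pi (fun _ : ι => ν) (Set.univ.pi (fun i => if i ∈ T then Cf else Ct))
          = ν Cf ^ j * ν Ct ^ (Fintype.card ι - j) := by
      intro T hT
      rw [Finset.mem_powersetCard_univ] at hT
      rw [Measure.pi_pi]
      have hite : ∀ i : ι, ν (if i ∈ T then Cf else Ct) = if i ∈ T then ν Cf else ν Ct :=
        fun i => apply_ite ν _ _ _
      simp_rw [hite]
      rw [Finset.prod_ite, Finset.prod_const, Finset.prod_const, filter_mem_eq, hT]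
      congr 1
      rw [Finset.filter_not, filter_mem_eq, Finset.card_sdiff_of_subset (Finset.subset_univ T),
        Finset.card_univ, hT]
    rw [Finset.sum_congr rfl heach, Finset.sum_const, Finset.card_powersetCard,
      Finset.card_univ, nsmul_eq_mul, mul_assoc]
  · intro T hT T' hT' hne
    simp only [Function.onFun]
    rw [Set.disjoint_left]
    intro x hx hx'
    simp only [Set.mem_univ_pi] at hx hx'
    apply hne
    ext i
    have h1 := hx i
    have h2 := hx' i
    by_cases h : i ∈ T <;> by_cases h' : i ∈ T' <;> simp [h, h'] at h1 h2 ⊢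
    · simp [hCf, hCt] at h1 h2; rw [h1.2] at h2; exact absurd h2.2 (by simp)
    · simp [hCf, hCt] at h1 h2; rw [h2.2] at h1; exact absurd h1.2 (by simp)
  · intro T hT
    refine MeasurableSet.univ_pi (fun i => ?_)
    by_cases h : i ∈ T
    · simp only [h, if_true]; exact meas_pair_le_false s
    · simp only [h, if_false]; exact meas_pair_le_true s
end piblocks

lemma pi_prod_meas {m : ℕ} (ν : Measure (Bool × ℝ)) [IsProbabilityMeasure ν]
    (S : Finset (Fin m)) (A : Set ({i : Fin m // i ∈ S} → Bool × ℝ))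
    (B : Set ({i : Fin m // ¬ i ∈ S} → Bool × ℝ)) (hA : MeasurableSet A)
    (hB : MeasurableSet B) :
    Measure.pi (fun _ : Fin m => ν)
        ((MeasurableEquiv.piEquivPiSubtypeProd (fun _ : Fin m => Bool × ℝ)
          (fun i => i ∈ S)) ⁻¹' (A ×ˢ B))
      = Measure.pi (fun _ : {i : Fin m // i ∈ S} => ν) A
        * Measure.pi (fun _ : {i : Fin m // ¬ i ∈ S} => ν) B := by
  have h := (measurePreserving_piEquivPiSubtypeProd (fun _ : Fin m => ν)
    (fun i => i ∈ S)).measure_preimage (hA.prod hB).nullMeasurableSet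
  rw [Measure.prod_prod] at h
  rw [Subsingleton.elim (Finset.Subtype.fintype S) (Subtype.fintype fun i => i ∈ S)]
  exact h

section meashelp
variable {ι : Type*}

lemma measSet_le_coord [Countable ι] (i : ι) (s : ℝ) :
    MeasurableSet {x : ι → Bool × ℝ | (x i).2 ≤ s} :=
  measurableSet_le (measurable_snd.comp (measurable_pi_apply i)) measurable_const

lemma measSet_all_le [Countable ι] (s : ℝ) :
    MeasurableSet {x : ι → Bool × ℝ | ∀ i, (x i).2 ≤ s} := by
  have h : {x : ι → Bool × ℝ | ∀ i, (x i).2 ≤ s} = ⋂ i, {x | (x i).2 ≤ s} := by ext; simp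
  rw [h]; exact MeasurableSet.iInter fun i => measSet_le_coord i s

lemma measSet_all_gt [Countable ι] (s : ℝ) :
    MeasurableSet {x : ι → Bool × ℝ | ∀ i, ¬ (x i).2 ≤ s} := by
  have h : {x : ι → Bool × ℝ | ∀ i, ¬ (x i).2 ≤ s} = ⋂ i, {x | (x i).2 ≤ s}ᶜ := by
    ext; simp [Set.mem_iInter]
  rw [h]; exact MeasurableSet.iInter fun i => (measSet_le_coord i s).compl

lemma measSet_count [Fintype ι] (t : ℕ → ℝ) (A : ℕ → Set ℕ) :
    MeasurableSet {x : ι → Bool × ℝ | ∀ k',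
      (Finset.univ.filter (fun i => (x i).2 ≤ t k')).card ∈ A k'} := by
  have h : {x : ι → Bool × ℝ | ∀ k',
        (Finset.univ.filter (fun i => (x i).2 ≤ t k')).card ∈ A k'}
      = ⋂ k', (fun x : ι → Bool × ℝ =>
          (Finset.univ.filter (fun i => (x i).2 ≤ t k')).card) ⁻¹' (A k') := by
    ext; simp [Set.mem_iInter]
  rw [h]
  exact MeasurableSet.iInter fun k' =>
    (measurable_card_filter Finset.univ (fun i (x : ι → Bool × ℝ) => (x i).2 ≤ t k')
      (fun i => measSet_le_coord i (t k'))) ((Set.to_countable (A k')).measurableSet)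

lemma measSet_card_false [Fintype ι] (s : Finset ι) (j : ℕ) :
    MeasurableSet {x : ι → Bool × ℝ | (s.filter (fun i => (x i).1 = false)).card = j} := by
  have h : {x : ι → Bool × ℝ | (s.filter (fun i => (x i).1 = false)).card = j}
      = (fun x : ι → Bool × ℝ => (s.filter (fun i => (x i).1 = false)).card) ⁻¹' {j} := by
    ext x; simp
  rw [h]
  exact (measurable_card_filter s (fun i (x : ι → Bool × ℝ) => (x i).1 = false)
    (fun i => (measurable_fst.comp (measurable_pi_apply i)) (MeasurableSet.singleton false)))
    (MeasurableSet.singleton j)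


lemma measSet_iffS {m : ℕ} (s : ℝ) (S : Finset (Fin m)) :
    MeasurableSet {x : Fin m → Bool × ℝ | ∀ i, ((x i).2 ≤ s ↔ i ∈ S)} := by
  have h : {x : Fin m → Bool × ℝ | ∀ i, ((x i).2 ≤ s ↔ i ∈ S)}
      = ⋂ i, {x : Fin m → Bool × ℝ | ((x i).2 ≤ s ↔ i ∈ S)} := by ext; simp
  rw [h]
  refine MeasurableSet.iInter fun i => ?_
  by_cases hi : i ∈ S
  · have h2 : {x : Fin m → Bool × ℝ | ((x i).2 ≤ s ↔ i ∈ S)} = {x | (x i).2 ≤ s} := by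
      ext; simp [hi]
    rw [h2]; exact measSet_le_coord i s
  · have h2 : {x : Fin m → Bool × ℝ | ((x i).2 ≤ s ↔ i ∈ S)} = {x | (x i).2 ≤ s}ᶜ := by
      ext; simp [hi]
    rw [h2]; exact (measSet_le_coord i s).compl
end meashelp

/-- In the unconditional independent model, conditionally on `|SU(t)| = k` (`k ≥ 1`),
the number of erroneous rejections `|H₀(H) ∩ SU(t)|` is binomial
`B(k, π₀ F₀(t_k) / G(t_k))` with `F₀(t) = t` and `G = π₀ F₀ + (1-π₀) F₁`:
equivalently, for every `j ≤ k`,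
`P(V₀ = j ∧ |SU| = k) = C(k,j) (π₀ t_k/G(t_k))^j ((1-π₀)F₁(t_k)/G(t_k))^{k-j} · P(|SU| = k)`. -/
theorem stepup_conditional_binomial (m : ℕ) (hm : 2 ≤ m)
    (pi0 : ℝ) (hpi0 : pi0 ∈ Set.Icc (0:ℝ) 1)
    (μ1 : Measure ℝ) [IsProbabilityMeasure μ1] (hsupp : μ1 (Set.Icc 0 1) = 1)
    (F1 : ℝ → ℝ) (hF1 : ∀ s, F1 s = (μ1 (Set.Iic s)).toReal) (hF1c : Continuous F1)
    (t : ℕ → ℝ) (ht0 : t 0 = 0) (ht : MonotoneOn t (Set.Icc 1 m))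
    (ht01 : ∀ j ∈ Set.Icc 1 m, t j ∈ Set.Icc (0:ℝ) 1)
    (G : ℝ → ℝ) (hG : ∀ s, G s = pi0 * s + (1 - pi0) * F1 s)
    (k : ℕ) (hk : 1 ≤ k) (hkm : k ≤ m) (hGpos : 0 < G (t k))
    (j : ℕ) (hj : j ≤ k) :
    (modelM m pi0 μ1
        {ω | V0SU m t ω = j ∧ (rejSUf m t (pvals m ω)).card = k}).toReal
      = (k.choose j : ℝ) * (pi0 * t k / G (t k)) ^ j
          * ((1 - pi0) * F1 (t k) / G (t k)) ^ (k - j)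
          * (modelM m pi0 μ1 {ω | (rejSUf m t (pvals m ω)).card = k}).toReal := by
  classical
  obtain ⟨hpi0a, hpi0b⟩ := hpi0
  haveI hprobν : IsProbabilityMeasure (coordM pi0 μ1) := coordM_prob ⟨hpi0a, hpi0b⟩
  haveI hprobμ : IsProbabilityMeasure (modelM m pi0 μ1) := by
    unfold modelM; infer_instance
  have hm1 : 1 ≤ m := le_trans hk hkm
  have htk0 : 0 ≤ t k := (ht01 k ⟨hk, hkm⟩).1
  have htk1 : t k ≤ 1 := (ht01 k ⟨hk, hkm⟩).2
  have ht10 : 0 ≤ t 1 := (ht01 1 ⟨le_refl 1, hm1⟩).1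
  set ν := coordM pi0 μ1 with hν
  set a := ν {z : Bool × ℝ | z.2 ≤ t k ∧ z.1 = false} with ha
  set b := ν {z : Bool × ℝ | z.2 ≤ t k ∧ z.1 = true} with hb
  set c := ν {z : Bool × ℝ | z.2 ≤ t k} with hc
  have hF1nn : 0 ≤ F1 (t k) := by rw [hF1]; exact ENNReal.toReal_nonneg
  have haval : a = ENNReal.ofReal (pi0 * t k) := by
    rw [ha, hν, coordM_false_Iic htk1, ← ENNReal.ofReal_mul hpi0a]
  have hbval : b = ENNReal.ofReal ((1 - pi0) * F1 (t k)) := by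
    rw [hb, hν, coordM_true_Iic, hF1, ENNReal.ofReal_mul (by linarith),
      ENNReal.ofReal_toReal (measure_ne_top _ _)]
  have hcab : c = a + b := by rw [hc, ha, hb, hν, coordM_Iic htk1]
  have hcval : c = ENNReal.ofReal (G (t k)) := by
    rw [hcab, haval, hbval, ← ENNReal.ofReal_add (mul_nonneg hpi0a htk0) (mul_nonneg (by linarith) hF1nn), hG]
  -- the blockwise events
  set ES : Finset (Fin m) → Set (Fin m → Bool × ℝ) := fun S =>
    {ω | (∀ i : Fin m, ((ω i).2 ≤ t k ↔ i ∈ S)) ∧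
      ∀ k', k < k' → k' ≤ m →
        (Finset.univ.filter (fun i : Fin m => (ω i).2 ≤ t k')).card < k'} with hES
  set ESj : Finset (Fin m) → Set (Fin m → Bool × ℝ) := fun S =>
    ES S ∩ {ω | (S.filter (fun i => (ω i).1 = false)).card = j} with hESj
  -- decomposition of the conditioning event
  have hdecomp : {ω : Fin m → Bool × ℝ | (rejSUf m t (pvals m ω)).card = k}
      = ⋃ S ∈ Finset.powersetCard k (Finset.univ : Finset (Fin m)), ES S := by
    ext ω
    rw [Set.mem_setOf_eq, rejSU_card_eq ht0 ht ht10 hm1 hk hkm]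
    simp only [Set.mem_iUnion, hES, Set.mem_setOf_eq, Finset.mem_powersetCard_univ,
      exists_prop, pvals]
    constructor
    · rintro ⟨hck, htail⟩
      exact ⟨Finset.univ.filter (fun i => (ω i).2 ≤ t k), hck, fun i => by simp, htail⟩
    · rintro ⟨S, hcardS, hiff, htail⟩
      have hfe : Finset.univ.filter (fun i : Fin m => (ω i).2 ≤ t k) = S := by
        ext i; simp [hiff i]
      have hfe' := congrArg Finset.card hfe
      exact ⟨hfe'.trans hcardS, htail⟩
  -- on ES S the rejection set is S
  have hrejS : ∀ S : Finset (Fin m), S.card = k → ∀ ω ∈ ES S,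
      rejSUf m t (pvals m ω) = S := by
    intro S hSk ω hω
    obtain ⟨hiff, htail⟩ := hω
    have hfe : Finset.univ.filter (fun i : Fin m => pvals m ω i ≤ t k) = S := by
      ext i; rw [Finset.mem_filter]; simp [pvals, hiff i]
    have hkS : kSUf m t (pvals m ω) = k := by
      apply kSUf_eq_of hkm
      · rw [hfe, hSk]
      · intro k' h1 h2
        exact htail k' h1 h2
    rw [rejSUf, hkS, hfe]
  have hdecompj : {ω : Fin m → Bool × ℝ | V0SU m t ω = j
        ∧ (rejSUf m t (pvals m ω)).card = k}
      = ⋃ S ∈ Finset.powersetCard k (Finset.univ : Finset (Fin m)), ESj S := by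
    ext ω
    simp only [Set.mem_setOf_eq, Set.mem_iUnion, exists_prop, hESj, Set.mem_inter_iff,
      Finset.mem_powersetCard_univ]
    constructor
    · rintro ⟨hV, hcard⟩
      have hmem : ω ∈ ⋃ S ∈ Finset.powersetCard k (Finset.univ : Finset (Fin m)), ES S := by
        rw [← hdecomp]; exact hcard
      simp only [Set.mem_iUnion, exists_prop, Finset.mem_powersetCard_univ] at hmem
      obtain ⟨S, hSk, hωS⟩ := hmem
      refine ⟨S, hSk, hωS, ?_⟩
      rw [V0SU, hrejS S hSk ω hωS] at hV
      exact hV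
    · rintro ⟨S, hSk, hωS, hfj⟩
      constructor
      · rw [V0SU, hrejS S hSk ω hωS]
        exact hfj
      · have : ω ∈ ⋃ S ∈ Finset.powersetCard k (Finset.univ : Finset (Fin m)), ES S := by
          simp only [Set.mem_iUnion, exists_prop, Finset.mem_powersetCard_univ]
          exact ⟨S, hSk, hωS⟩
        rw [← hdecomp] at this
        exact this
  -- measurability
  have hmeasES : ∀ S : Finset (Fin m), MeasurableSet (ES S) := by
    intro S
    have h1 : ES S = {ω : Fin m → Bool × ℝ | ∀ i, ((ω i).2 ≤ t k ↔ i ∈ S)}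
        ∩ {ω : Fin m → Bool × ℝ | ∀ k',
            (Finset.univ.filter (fun i : Fin m => (ω i).2 ≤ t k')).card
              ∈ {n | k < k' → k' ≤ m → n < k'}} := by
      ext ω; exact ⟨fun h => h, fun h => h⟩
    rw [h1]
    exact (measSet_iffS (t k) S).inter (measSet_count t _)
  have hmeasESj : ∀ S : Finset (Fin m), MeasurableSet (ESj S) := fun S =>
    (hmeasES S).inter (measSet_card_false S j)
  -- pairwise disjointness
  have hdisj : (↑(Finset.powersetCard k (Finset.univ : Finset (Fin m)))
      : Set (Finset (Fin m))).PairwiseDisjoint ES := by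
    intro S hS S' hS' hne
    simp only [Function.onFun]
    rw [Set.disjoint_left]
    intro ω hω hω'
    exact hne (by ext i; rw [← hω.1 i, hω'.1 i])
  have hdisjj : (↑(Finset.powersetCard k (Finset.univ : Finset (Fin m)))
      : Set (Finset (Fin m))).PairwiseDisjoint ESj := by
    intro S hS S' hS' hne
    exact Set.disjoint_of_subset Set.inter_subset_left Set.inter_subset_left
      (hdisj hS hS' hne)
  -- blockwise factorization
  have hfac : ∀ S ∈ Finset.powersetCard k (Finset.univ : Finset (Fin m)), ∃ β : ENNReal,
      modelM m pi0 μ1 (ES S) = c ^ k * β ∧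
      modelM m pi0 μ1 (ESj S) = (k.choose j) * a ^ j * b ^ (k - j) * β := by
    intro S hS
    rw [Finset.mem_powersetCard_univ] at hS
    set A1 : Set ({i : Fin m // i ∈ S} → Bool × ℝ) := {x | ∀ i, (x i).2 ≤ t k} with hA1
    set A1j : Set ({i : Fin m // i ∈ S} → Bool × ℝ) := {x | (∀ i, (x i).2 ≤ t k)
      ∧ (Finset.univ.filter (fun i => (x i).1 = false)).card = j} with hA1j
    set B1 : Set ({i : Fin m // ¬ i ∈ S} → Bool × ℝ) := {y | (∀ i, ¬ (y i).2 ≤ t k)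
      ∧ ∀ k', k < k' → k' ≤ m →
        (Finset.univ.filter (fun i => (y i).2 ≤ t k')).card + k < k'} with hB1
    have hA1meas : MeasurableSet A1 := measSet_all_le (t k)
    have hA1jmeas : MeasurableSet A1j := by
      have h1 : A1j = A1 ∩ {x : {i : Fin m // i ∈ S} → Bool × ℝ |
          (Finset.univ.filter (fun i => (x i).1 = false)).card = j} := by
        ext x; simp only [hA1j, hA1, Set.mem_setOf_eq, Set.mem_inter_iff]
      rw [h1]
      exact hA1meas.inter (measSet_card_false Finset.univ j)
    have hB1meas : MeasurableSet B1 := by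
      have h1 : B1 = {y : {i : Fin m // ¬ i ∈ S} → Bool × ℝ | ∀ i, ¬ (y i).2 ≤ t k}
          ∩ {y : {i : Fin m // ¬ i ∈ S} → Bool × ℝ | ∀ k',
              (Finset.univ.filter (fun i => (y i).2 ≤ t k')).card
                ∈ {n | k < k' → k' ≤ m → n + k < k'}} := by
        ext y; exact ⟨fun h => h, fun h => h⟩
      rw [h1]
      exact (measSet_all_gt (t k)).inter (measSet_count t _)
    set e := MeasurableEquiv.piEquivPiSubtypeProd (fun _ : Fin m => Bool × ℝ)
      (fun i => i ∈ S) with he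
    have hecoe : ∀ ω : Fin m → Bool × ℝ,
        e ω = (fun i : {i : Fin m // i ∈ S} => ω i.1,
               fun i : {i : Fin m // ¬ i ∈ S} => ω i.1) := fun ω => rfl
    -- the monotonicity fact we need
    have htle : ∀ k', k < k' → k' ≤ m → t k ≤ t k' := fun k' h1 h2 =>
      ht ⟨hk, hkm⟩ ⟨le_trans hk (le_of_lt h1), h2⟩ (le_of_lt h1)
    -- key counting identity on ES-like configurations
    have hcount : ∀ ω : Fin m → Bool × ℝ, (∀ i : Fin m, ((ω i).2 ≤ t k ↔ i ∈ S)) →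
        ∀ k', k < k' → k' ≤ m →
        (Finset.univ.filter (fun i : Fin m => (ω i).2 ≤ t k')).card
          = k + ((Finset.univ : Finset {i : Fin m // ¬ i ∈ S}).filter
              (fun i => (ω i.1).2 ≤ t k')).card := by
      intro ω hiff k' h1 h2
      rw [count_split S (fun i : Fin m => (ω i).2 ≤ t k')
        (fun i hi => le_trans ((hiff i).mpr hi) (htle k' h1 h2)), hS]
    have hESeq : ES S = e ⁻¹' (A1 ×ˢ B1) := by
      ext ω
      simp only [hES, Set.mem_setOf_eq, Set.mem_preimage, hecoe, Set.mem_prod,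
        hA1, hB1]
      constructor
      · rintro ⟨hiff, htail⟩
        refine ⟨fun i => (hiff i.1).mpr i.2, fun i hcon => i.2 ((hiff i.1).mp hcon),
          fun k' h1 h2 => ?_⟩
        have := htail k' h1 h2
        rw [hcount ω hiff k' h1 h2] at this
        omega
      · rintro ⟨hin, hout, htail⟩
        have hiff : ∀ i : Fin m, ((ω i).2 ≤ t k ↔ i ∈ S) := by
          intro i
          constructor
          · intro hle
            by_contra hni
            exact hout ⟨i, hni⟩ hle
          · intro hi
            exact hin ⟨i, hi⟩
        refine ⟨hiff, fun k' h1 h2 => ?_⟩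
        rw [hcount ω hiff k' h1 h2]
        have := htail k' h1 h2
        omega
    have hESjeq : ESj S = e ⁻¹' (A1j ×ˢ B1) := by
      have hsub : ∀ ω : Fin m → Bool × ℝ,
          ((S.filter (fun i => (ω i).1 = false)).card
            = ((Finset.univ : Finset {i : Fin m // i ∈ S}).filter
                (fun i => (ω i.1).1 = false)).card) := by
        intro ω
        apply Finset.card_bij (fun (a : Fin m) (ha : a ∈ S.filter (fun i => (ω i).1 = false)) =>
          (⟨a, (Finset.mem_filter.mp ha).1⟩ : {i : Fin m // i ∈ S}))
        · intro a ha
          simp only [Finset.mem_filter, Finset.mem_univ, true_and]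
          exact (Finset.mem_filter.mp ha).2
        · intro a ha a' ha' h
          simpa using h
        · rintro ⟨b, hbS⟩ hb
          simp only [Finset.mem_filter, Finset.mem_univ, true_and] at hb
          exact ⟨b, Finset.mem_filter.mpr ⟨hbS, hb⟩, rfl⟩
      ext ω
      simp only [hESj, Set.mem_inter_iff, Set.mem_setOf_eq, hESeq, Set.mem_preimage,
        hecoe, Set.mem_prod, hA1, hA1j, Set.mem_setOf_eq]
      rw [hsub ω]
      tauto
    refine ⟨Measure.pi (fun _ : {i : Fin m // ¬ i ∈ S} => ν) B1, ?_, ?_⟩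
    · rw [hESeq]
      have hmp : modelM m pi0 μ1 (e ⁻¹' (A1 ×ˢ B1))
          = Measure.pi (fun _ : {i : Fin m // i ∈ S} => ν) A1
            * Measure.pi (fun _ : {i : Fin m // ¬ i ∈ S} => ν) B1 := by
        have h0 : modelM m pi0 μ1 = Measure.pi (fun _ : Fin m => ν) := rfl
        rw [h0, he]
        exact pi_prod_meas ν S A1 B1 hA1meas hB1meas
      rw [hmp, hA1, pi_all_le, Fintype.card_coe, hS, hc]
    · rw [hESjeq]
      have hmp : modelM m pi0 μ1 (e ⁻¹' (A1j ×ˢ B1))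
          = Measure.pi (fun _ : {i : Fin m // i ∈ S} => ν) A1j
            * Measure.pi (fun _ : {i : Fin m // ¬ i ∈ S} => ν) B1 := by
        have h0 : modelM m pi0 μ1 = Measure.pi (fun _ : Fin m => ν) := rfl
        rw [h0, he]
        exact pi_prod_meas ν S A1j B1 hA1jmeas hB1meas
      rw [hmp, hA1j, pi_binom, Fintype.card_coe, hS, ha, hb]
  -- summation
  have hmuE : modelM m pi0 μ1 {ω | (rejSUf m t (pvals m ω)).card = k}
      = ∑ S ∈ Finset.powersetCard k (Finset.univ : Finset (Fin m)),
          modelM m pi0 μ1 (ES S) := by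
    rw [hdecomp, measure_biUnion_finset hdisj (fun S _ => hmeasES S)]
  have hmuEj : modelM m pi0 μ1 {ω | V0SU m t ω = j ∧ (rejSUf m t (pvals m ω)).card = k}
      = ∑ S ∈ Finset.powersetCard k (Finset.univ : Finset (Fin m)),
          modelM m pi0 μ1 (ESj S) := by
    rw [hdecompj, measure_biUnion_finset hdisjj (fun S _ => hmeasESj S)]
  have hkey : modelM m pi0 μ1 {ω | V0SU m t ω = j ∧ (rejSUf m t (pvals m ω)).card = k}
        * c ^ k
      = ((k.choose j : ENNReal) * a ^ j * b ^ (k - j))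
        * modelM m pi0 μ1 {ω | (rejSUf m t (pvals m ω)).card = k} := by
    rw [hmuE, hmuEj, Finset.sum_mul, Finset.mul_sum]
    refine Finset.sum_congr rfl fun S hS => ?_
    obtain ⟨β, h1, h2⟩ := hfac S hS
    rw [h1, h2]
    ring
  -- pass to real numbers
  have hank : a ≠ ⊤ := by rw [haval]; exact ENNReal.ofReal_ne_top
  have hbnk : b ≠ ⊤ := by rw [hbval]; exact ENNReal.ofReal_ne_top
  have hreal := congrArg ENNReal.toReal hkey
  rw [ENNReal.toReal_mul, ENNReal.toReal_mul, ENNReal.toReal_mul, ENNReal.toReal_mul,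
    ENNReal.toReal_pow, ENNReal.toReal_pow, ENNReal.toReal_pow, ENNReal.toReal_natCast,
    hcval, haval, hbval, ENNReal.toReal_ofReal (le_of_lt hGpos),
    ENNReal.toReal_ofReal (mul_nonneg hpi0a htk0),
    ENNReal.toReal_ofReal (mul_nonneg (by linarith) hF1nn)] at hreal
  set X := (modelM m pi0 μ1
    {ω | V0SU m t ω = j ∧ (rejSUf m t (pvals m ω)).card = k}).toReal with hX
  set Y := (modelM m pi0 μ1 {ω | (rejSUf m t (pvals m ω)).card = k}).toReal with hY
  set g := G (t k) with hg
  set at' := pi0 * t k with hat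
  set bt := (1 - pi0) * F1 (t k) with hbt
  have hgk : g ^ j * g ^ (k - j) = g ^ k := by
    rw [← pow_add, Nat.add_sub_cancel' hj]
  have hgkpos : (0:ℝ) < g ^ k := pow_pos hGpos k
  have hXval : X = ((k.choose j : ℝ) * at' ^ j * bt ^ (k - j) * Y) / g ^ k := by
    rw [eq_div_iff (ne_of_gt hgkpos)]
    exact hreal
  rw [hXval, div_pow, div_pow]
  calc ((k.choose j : ℝ) * at' ^ j * bt ^ (k - j) * Y) / g ^ k
      = ((k.choose j : ℝ) * (at' ^ j / g ^ j) * (bt ^ (k - j) / g ^ (k - j)) * Y)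
          * ((g ^ j * g ^ (k - j)) / g ^ k) := by
        field_simp
    _ = (k.choose j : ℝ) * (at' ^ j / g ^ j) * (bt ^ (k - j) / g ^ (k - j)) * Y := by
        rw [hgk, div_self (ne_of_gt hgkpos), mul_one]
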